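/- Let (Z,d,μ) be a doubling metric measure space, 1 < p < ∞, Ω ⊆ Z a measurable set satisfying the measure-density condition with constant c_Ω, and V a Banach space. If u ∈ L^1_loc(Ω; V) has g ∈ D_{loc,p}(u) with g restricted to each ball B(z,s) ∩ Ω (z ∈ Ω, s ≤ 1) a Hajłasz upper gradient of u there, then the local sharp maximal function u^♯_s(z) = sup_{0<t<s} (1/t)·⨍_{Ω∩B(z,t)}⨍_{Ω∩B(z,t)} |u(x)−u(y)| dμ(x) dμ(y) satisfies u^♯_s(z) ≤ C(c_Ω)·M(ĝ)(z) for every z ∈ Ω, where ĝ is the zero extension of g and M the Hardy–Littlewood maximal function on Z. -/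

import Mathlib

open MeasureTheory Metric
open scoped ENNReal NNReal

/-- The restricted sharp maximal function
`u♯ₛ(z) = sup_{0<t<s} (1/t) ⨍_{Ω∩B(z,t)} ⨍_{Ω∩B(z,t)} ‖u(x) − u(y)‖ dμ(x) dμ(y)`. -/
noncomputable def sharpFn {Z V : Type*} [MetricSpace Z] [MeasurableSpace Z]
    [NormedAddCommGroup V] (μ : MeasureTheory.Measure Z) (Ω : Set Z) (s : ℝ)
    (u : Z → V) (z : Z) : ℝ≥0∞ :=
  ⨆ (t : ℝ) (_ : 0 < t) (_ : t < s),
    (ENNReal.ofReal t)⁻¹ *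
      ⨍⁻ x in Metric.ball z t ∩ Ω,
        (⨍⁻ y in Metric.ball z t ∩ Ω, ENNReal.ofReal ‖u x - u y‖ ∂μ) ∂μ

/-- The Hardy–Littlewood maximal function `M f (x) = sup_{r>0} ⨍_{B(x,r)} ‖f‖ dμ`. -/
noncomputable def maximalFn {Z V : Type*} [MetricSpace Z] [MeasurableSpace Z]
    [NormedAddCommGroup V] (μ : MeasureTheory.Measure Z) (f : Z → V) (x : Z) : ℝ≥0∞ :=
  ⨆ (r : ℝ) (_ : 0 < r), ⨍⁻ y in Metric.ball x r, (‖f y‖₊ : ℝ≥0∞) ∂μ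

/-- **First half of Proposition 3.12.** If `Ω` satisfies the measure-density condition
and `g` is a Hajłasz upper gradient of `u` on every ball `B(z,s) ∩ Ω`, `z ∈ Ω`,
`0 < s ≤ 1`, then the restricted sharp maximal function satisfies
`u♯ₛ(z) ≤ C(c_Ω) · M(ĝ)(z)` for every `z ∈ Ω`, where `ĝ` is the zero extension
of `g` and `M` the Hardy–Littlewood maximal function on `Z`. -/
theorem my_setLIntegral_le_of_le_on {α : Type*} [MeasurableSpace α] (μ : Measure α)
    (s N : Set α) (hN : μ N = 0) (f h : α → ℝ≥0∞) (hh : Measurable h)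
    (hfh : ∀ y ∈ s \ N, f y ≤ h y) :
    ∫⁻ y in s, f y ∂μ ≤ ∫⁻ y in s, h y ∂μ := by
  rw [show (∫⁻ y in s, f y ∂μ) = lintegral (μ.restrict s) f from rfl, lintegral_def]
  refine iSup₂_le fun φ hφ => ?_
  set ψ : α → ℝ≥0∞ := fun y => min (φ y) (h y) with hψ
  have hψmeas : Measurable ψ := φ.measurable.min hh
  have hcongr : φ =ᵐ[μ.restrict s] ψ := by
    have hE : MeasurableSet {y | φ y ≠ ψ y} := by
      have : {y | φ y ≠ ψ y} = {y | φ y < ψ y} ∪ {y | ψ y < φ y} := by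
        ext y; exact ne_iff_lt_or_gt
      rw [this]
      exact (measurableSet_lt φ.measurable hψmeas).union
        (measurableSet_lt hψmeas φ.measurable)
    have : (μ.restrict s) {y | φ y ≠ ψ y} = 0 := by
      rw [Measure.restrict_apply hE]
      refine measure_mono_null ?_ hN
      intro y hy
      by_contra hyN
      exact hy.1 (min_eq_left ((hφ y).trans (hfh y ⟨hy.2, hyN⟩))).symm
    exact (ae_iff.mpr this)
  calc φ.lintegral (μ.restrict s) = ∫⁻ y in s, φ y ∂μ :=
        (φ.lintegral_eq_lintegral _).symm
    _ = ∫⁻ y in s, ψ y ∂μ := lintegral_congr_ae hcongr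
    _ ≤ ∫⁻ y in s, h y ∂μ := lintegral_mono fun y => min_le_right _ _

theorem stmt_15 {Z V : Type*} [MetricSpace Z] [MeasurableSpace Z]
    [NormedAddCommGroup V]
    (μ : Measure Z)
    (hposμ : ∀ (x : Z) (r : ℝ), 0 < r → 0 < μ (ball x r))
    (hfinμ : ∀ (x : Z) (r : ℝ), μ (ball x r) < ⊤)
    (cμ : ℝ≥0) (hdoubling : ∀ (x : Z) (r : ℝ), μ (ball x (2 * r)) ≤ cμ * μ (ball x r))
    (Ω : Set Z) (hΩ : MeasurableSet Ω) (cΩ : ℝ≥0) (hcΩ : 0 < cΩ)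
    (hdensity : ∀ x ∈ Ω, ∀ r : ℝ, 0 < r → r ≤ 1 →
      (cΩ : ℝ≥0∞) * μ (ball x r) ≤ μ (ball x r ∩ Ω))
    (u : Z → V) (g : Z → ℝ) (hgmeas : Measurable g) (hg0 : ∀ z, 0 ≤ g z)
    (s : ℝ) (hs : 0 < s) (hs1 : s ≤ 1)
    (hgrad : ∀ z ∈ Ω, ∃ N : Set Z, μ N = 0 ∧
      ∀ x ∈ (ball z s ∩ Ω) \ N, ∀ y ∈ (ball z s ∩ Ω) \ N,
        ‖u x - u y‖ ≤ dist x y * (g x + g y)) :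
    ∃ C : ℝ≥0, 0 < C ∧ ∀ z ∈ Ω,
      sharpFn μ Ω s u z ≤ (C : ℝ≥0∞) * maximalFn μ (Ω.indicator g) z := by
  simp only [sharpFn, maximalFn]
  refine ⟨4 * cΩ⁻¹, mul_pos (by norm_num) (inv_pos.mpr hcΩ), ?_⟩
  intro z hz
  refine iSup_le fun t => iSup_le fun ht => iSup_le fun hts => ?_
  set B := ball z t with hB
  set S := B ∩ Ω with hSdef
  have hBpos : 0 < μ B := hposμ z t ht
  have hBfin : μ B < ⊤ := hfinμ z t
  have hdens := hdensity z hz t ht (hts.le.trans hs1)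
  have hSpos : 0 < μ S := by
    refine lt_of_lt_of_le ?_ hdens
    exact ENNReal.mul_pos (by exact_mod_cast hcΩ.ne') hBpos.ne'
  have hSfin : μ S < ⊤ := (measure_mono Set.inter_subset_left).trans_lt hBfin
  have hSne : μ S ≠ 0 := hSpos.ne'
  have hSnt : μ S ≠ ⊤ := hSfin.ne
  have hSinvnt : (μ S)⁻¹ ≠ ⊤ := ENNReal.inv_ne_top.mpr hSne
  have hot0 : ENNReal.ofReal t ≠ 0 := by simp [ENNReal.ofReal_eq_zero, not_le, ht]
  have hotT : ENNReal.ofReal t ≠ ⊤ := ENNReal.ofReal_ne_top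
  obtain ⟨N, hN0, hN⟩ := hgrad z hz
  set Ig := ∫⁻ y in S, ENNReal.ofReal (g y) ∂μ with hIgdef
  -- inner bound
  have hinner : ∀ x ∈ S \ N,
      (∫⁻ y in S, ENNReal.ofReal ‖u x - u y‖ ∂μ) ≤
        ENNReal.ofReal (2 * t) * (ENNReal.ofReal (g x) * μ S + Ig) := by
    intro x hx
    have hxS : x ∈ (ball z s ∩ Ω) \ N :=
      ⟨⟨ball_subset_ball hts.le hx.1.1, hx.1.2⟩, hx.2⟩
    calc ∫⁻ y in S, ENNReal.ofReal ‖u x - u y‖ ∂μ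
        ≤ ∫⁻ y in S, ENNReal.ofReal (2 * t) *
            (ENNReal.ofReal (g x) + ENNReal.ofReal (g y)) ∂μ := by
          refine my_setLIntegral_le_of_le_on μ S N hN0 _ _
            (measurable_const.mul (measurable_const.add
              (ENNReal.measurable_ofReal.comp hgmeas))) ?_
          intro y hy
          have hyS' : y ∈ (ball z s ∩ Ω) \ N :=
            ⟨⟨ball_subset_ball hts.le hy.1.1, hy.1.2⟩, hy.2⟩
          have hd : dist x y ≤ 2 * t := by
            have h3 := dist_triangle x z y
            have h1 : dist x z < t := mem_ball.mp hx.1.1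
            have h2 : dist z y < t := by
              have := mem_ball.mp hy.1.1; rwa [dist_comm]
            linarith
          have hb : ‖u x - u y‖ ≤ 2 * t * (g x + g y) := by
            have hgg : 0 ≤ g x + g y := by have := hg0 x; have := hg0 y; linarith
            nlinarith [hN x hxS y hyS']
          calc ENNReal.ofReal ‖u x - u y‖ ≤ ENNReal.ofReal (2 * t * (g x + g y)) :=
                ENNReal.ofReal_le_ofReal hb
            _ = ENNReal.ofReal (2 * t) * (ENNReal.ofReal (g x) + ENNReal.ofReal (g y)) := by
                rw [ENNReal.ofReal_mul (by linarith), ENNReal.ofReal_add (hg0 x) (hg0 y)]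
      _ = ENNReal.ofReal (2 * t) * (ENNReal.ofReal (g x) * μ S + Ig) := by
          rw [lintegral_const_mul' _ _ ENNReal.ofReal_ne_top,
            lintegral_add_left measurable_const, setLIntegral_const]
  -- the outer bound
  have houter : (∫⁻ x in S, (⨍⁻ y in S, ENNReal.ofReal ‖u x - u y‖ ∂μ) ∂μ)
      ≤ (μ S)⁻¹ * (ENNReal.ofReal (2 * t) * (Ig * μ S + Ig * μ S)) := by
    calc (∫⁻ x in S, (⨍⁻ y in S, ENNReal.ofReal ‖u x - u y‖ ∂μ) ∂μ)
        ≤ ∫⁻ x in S, (μ S)⁻¹ * (ENNReal.ofReal (2 * t) *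
            (ENNReal.ofReal (g x) * μ S + Ig)) ∂μ := by
          refine my_setLIntegral_le_of_le_on μ S N hN0 _ _
            (measurable_const.mul (measurable_const.mul
              (((ENNReal.measurable_ofReal.comp hgmeas).mul_const _).add_const _))) ?_
          intro x hx
          rw [setLAverage_eq, ENNReal.div_eq_inv_mul]
          exact mul_le_mul_right (hinner x hx) _
      _ = (μ S)⁻¹ * (ENNReal.ofReal (2 * t) * (Ig * μ S + Ig * μ S)) := by
          rw [lintegral_const_mul' _ _ hSinvnt,
            lintegral_const_mul' _ _ ENNReal.ofReal_ne_top,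
            lintegral_add_right _ measurable_const,
            lintegral_mul_const' _ _ hSnt, setLIntegral_const]
  -- main estimate
  have main : (ENNReal.ofReal t)⁻¹ *
      ⨍⁻ x in S, (⨍⁻ y in S, ENNReal.ofReal ‖u x - u y‖ ∂μ) ∂μ
      ≤ 4 * (Ig * (μ S)⁻¹) := by
    rw [setLAverage_eq, ENNReal.div_eq_inv_mul]
    calc (ENNReal.ofReal t)⁻¹ * ((μ S)⁻¹ *
          ∫⁻ x in S, (⨍⁻ y in S, ENNReal.ofReal ‖u x - u y‖ ∂μ) ∂μ)
        ≤ (ENNReal.ofReal t)⁻¹ * ((μ S)⁻¹ *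
            ((μ S)⁻¹ * (ENNReal.ofReal (2 * t) * (Ig * μ S + Ig * μ S)))) := by
          gcongr
      _ = ((ENNReal.ofReal t)⁻¹ * ENNReal.ofReal t) * ((μ S) * (μ S)⁻¹) *
            (4 * (Ig * (μ S)⁻¹)) := by
          rw [ENNReal.ofReal_mul (by norm_num : (0:ℝ) ≤ 2), ENNReal.ofReal_ofNat]
          ring
      _ = 4 * (Ig * (μ S)⁻¹) := by
          rw [ENNReal.inv_mul_cancel hot0 hotT, ENNReal.mul_inv_cancel hSne hSnt,
            one_mul, one_mul]
  refine main.trans ?_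
  have hIginv : (μ S)⁻¹ ≤ (cΩ : ℝ≥0∞)⁻¹ * (μ B)⁻¹ := by
    rw [← ENNReal.mul_inv (Or.inl (by exact_mod_cast hcΩ.ne')) (Or.inl ENNReal.coe_ne_top)]
    exact ENNReal.inv_le_inv' hdens
  have hIg' : Ig = ∫⁻ y in B, (‖Set.indicator Ω g y‖₊ : ℝ≥0∞) ∂μ := by
    have h1 : ∀ y, ((‖Set.indicator Ω g y‖₊ : ℝ≥0∞)) =
        Set.indicator Ω (fun y => ENNReal.ofReal (g y)) y := by
      intro y
      by_cases hy : y ∈ Ω <;>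
        simp [Set.indicator_of_mem, Set.indicator_of_notMem, hy,
          ← enorm_eq_nnnorm, Real.enorm_eq_ofReal (hg0 y)]
    simp only [h1]
    rw [lintegral_indicator hΩ, Measure.restrict_restrict hΩ, Set.inter_comm]
  have step2 : (4 : ℝ≥0∞) * (Ig * (μ S)⁻¹) ≤
      ((4 * cΩ⁻¹ : ℝ≥0) : ℝ≥0∞) * (Ig * (μ B)⁻¹) := by
    calc (4 : ℝ≥0∞) * (Ig * (μ S)⁻¹)
        ≤ 4 * (Ig * ((cΩ : ℝ≥0∞)⁻¹ * (μ B)⁻¹)) := by gcongr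
      _ = ((4 * cΩ⁻¹ : ℝ≥0) : ℝ≥0∞) * (Ig * (μ B)⁻¹) := by
          push_cast [ENNReal.coe_inv hcΩ.ne']
          ring
  refine step2.trans ?_
  gcongr
  have heq : Ig * (μ B)⁻¹ = ⨍⁻ y in B, (‖Set.indicator Ω g y‖₊ : ℝ≥0∞) ∂μ := by
    rw [setLAverage_eq, hIg', ENNReal.div_eq_inv_mul]; ring
  rw [heq]
  exact le_iSup₂ (f := fun r (_ : 0 < r) =>
    ⨍⁻ y in Metric.ball z r, (‖Set.indicator Ω g y‖₊ : ℝ≥0∞) ∂μ) t ht
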